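/- Let X and Y be Polish spaces and φ : X × Y → [-∞,∞] a Baire measurable function. Then inf*_{(x,y)} φ(x,y) = inf*_x inf*_y φ(x,y), where inf*_x ψ(x) denotes the maximum r such that {x : ψ(x) ≥ r} is comeagre (this maximum is attained). -/

import Mathlib

/-- A function into `[-∞,∞]` is Baire measurable if the preimage of every Borel
set is Baire measurable (has the Baire property). -/
def BaireMeasurableFun {X : Type*} [TopologicalSpace X] (φ : X → EReal) : Prop :=
  ∀ s : Set EReal, MeasurableSet s → BaireMeasurableSet (φ ⁻¹' s)

/-- `inf* φ`: the greatest `r` such that `φ ≥ r` on a comeagre set (the supremum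
below is in fact attained). -/
noncomputable def infStar {X : Type*} [TopologicalSpace X] (φ : X → EReal) : EReal :=
  sSup {r : EReal | {x : X | r ≤ φ x} ∈ residual X}

open Filter Set Topology TopologicalSpace

section KU

variable {X Y : Type*} [TopologicalSpace X] [TopologicalSpace Y]

/-- Sections of a dense open set in a product are comeagrely dense. -/
lemma aux_dense_open_sections [SecondCountableTopology Y] {U : Set (X × Y)}
    (hUo : IsOpen U) (hUd : Dense U) :
    ∀ᶠ x in residual X, Dense {y : Y | (x, y) ∈ U} := by
  have key : ∀ V ∈ countableBasis Y, V.Nonempty →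
      {x : X | ∃ y ∈ V, (x, y) ∈ U} ∈ residual X := by
    intro V hV hVne
    apply residual_of_dense_open
    · have : {x : X | ∃ y ∈ V, (x, y) ∈ U} = ⋃ y ∈ V, {x | (x, y) ∈ U} := by
        ext x; simp
      rw [this]
      exact isOpen_biUnion fun y _ => hUo.preimage (Continuous.prodMk_left y)
    · rw [dense_iff_inter_open]
      intro W hWo hWne
      have hne : (W ×ˢ V ∩ U).Nonempty :=
        hUd.inter_open_nonempty _ (hWo.prod (isOpen_of_mem_countableBasis hV))
          (hWne.prod hVne)
      obtain ⟨⟨x, y⟩, ⟨hx, hy⟩, hU'⟩ := hne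
      exact ⟨x, hx, y, hy, hU'⟩
  have hco : ∀ᶠ x in residual X, ∀ V ∈ countableBasis Y, V.Nonempty → ∃ y ∈ V, (x, y) ∈ U := by
    rw [eventually_countable_ball (countable_countableBasis Y)]
    intro V hV
    by_cases hVne : V.Nonempty
    · exact mem_of_superset (key V hV hVne) fun x hx _ => hx
    · exact Eventually.of_forall fun x h => absurd h hVne
  filter_upwards [hco] with x hx
  rw [dense_iff_inter_open]
  intro W hWo hWne
  obtain ⟨V, hV, hVsub, hVne⟩ :
      ∃ V ∈ countableBasis Y, V ⊆ W ∧ V.Nonempty := by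
    obtain ⟨y, hy⟩ := hWne
    obtain ⟨V, hV, hyV, hVW⟩ := (isBasis_countableBasis Y).exists_subset_of_mem_open hy hWo
    exact ⟨V, hV, hVW, ⟨y, hyV⟩⟩
  obtain ⟨y, hyV, hyU⟩ := hx V hV hVne
  exact ⟨y, hVsub hyV, hyU⟩

/-- Easy direction of Kuratowski–Ulam: a comeagre set in a product has comeagre
sections over a comeagre set of first coordinates. -/
lemma aux_residual_sections [SecondCountableTopology Y] {S : Set (X × Y)}
    (hS : S ∈ residual (X × Y)) :
    ∀ᶠ x in residual X, {y : Y | (x, y) ∈ S} ∈ residual Y := by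
  rw [mem_residual_iff] at hS
  obtain ⟨T, hTo, hTd, hTc, hTsub⟩ := hS
  have hco : ∀ᶠ x in residual X, ∀ U ∈ T, Dense {y : Y | (x, y) ∈ U} := by
    rw [eventually_countable_ball hTc]
    exact fun U hU => aux_dense_open_sections (hTo U hU) (hTd U hU)
  filter_upwards [hco] with x hx
  have h1 : (⋂ U ∈ T, {y : Y | (x, y) ∈ U}) ∈ residual Y :=
    (countable_bInter_mem hTc).2 fun U hU =>
      residual_of_dense_open ((hTo U hU).preimage (Continuous.prodMk_right x)) (hx U hU)
  refine mem_of_superset h1 fun y hy => ?_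
  apply hTsub
  intro U hU
  simp only [mem_iInter, mem_setOf_eq] at hy
  exact hy U hU

/-- Hard direction of Kuratowski–Ulam: a Baire measurable set with comeagrely
many comeagre sections is comeagre. -/
lemma aux_residual_of_sections [BaireSpace X] [BaireSpace Y] [SecondCountableTopology Y]
    {S : Set (X × Y)} (hS : BaireMeasurableSet S)
    (h : ∀ᶠ x in residual X, {y : Y | (x, y) ∈ S} ∈ residual Y) :
    S ∈ residual (X × Y) := by
  obtain ⟨U, hUo, hSU⟩ := hS.residualEq_isOpen
  have hE : {p : X × Y | p ∈ S ↔ p ∈ U} ∈ residual (X × Y) :=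
    Filter.eventuallyEq_set.mp hSU
  have hEsec := aux_residual_sections hE
  have hxU : ∀ᶠ x in residual X, Dense {y : Y | (x, y) ∈ U} := by
    filter_upwards [h, hEsec] with x hx hEx
    have : {y : Y | (x, y) ∈ U} ∈ residual Y := by
      refine mem_of_superset (inter_mem hx hEx) fun y hy => ?_
      exact hy.2.mp hy.1
    exact dense_of_mem_residual this
  have hUd : Dense U := by
    rw [dense_iff_inter_open]
    intro W hWo hWne
    obtain ⟨⟨a, b⟩, hab⟩ := hWne
    obtain ⟨A, B, hA, hB, haA, hbB, hABW⟩ := isOpen_prod_iff.1 hWo a b hab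
    obtain ⟨x, hxA, hxd⟩ :=
      (dense_of_mem_residual hxU).inter_open_nonempty A hA ⟨a, haA⟩
    obtain ⟨y, hyB, hyU⟩ := (dense_iff_inter_open.mp hxd) B hB ⟨b, hbB⟩
    exact ⟨(x, y), hABW ⟨hxA, hyB⟩, hyU⟩
  have hUres : U ∈ residual (X × Y) := residual_of_dense_open hUo hUd
  refine mem_of_superset (inter_mem hUres hE) fun p hp => ?_
  exact hp.2.mpr hp.1

end KU

section infStarLemmas

variable {X : Type*} [TopologicalSpace X]

/-- The supremum defining `infStar` is attained: `φ ≥ infStar φ` comeagrely. -/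
lemma aux_infStar_mem (ψ : X → EReal) : {x : X | infStar ψ ≤ ψ x} ∈ residual X := by
  set R := {r : EReal | {x : X | r ≤ ψ x} ∈ residual X} with hR
  have hne : R.Nonempty := ⟨⊥, by simp [hR, univ_mem]⟩
  have hbdd : BddAbove R := ⟨⊤, fun r _ => le_top⟩
  obtain ⟨u, hmono, htend, hmem⟩ := exists_seq_tendsto_sSup hne hbdd
  have hset : {x : X | infStar ψ ≤ ψ x} = ⋂ n, {x : X | u n ≤ ψ x} := by
    ext x
    simp only [mem_iInter, mem_setOf_eq]
    constructor
    · intro hx n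
      exact (le_sSup (hmem n)).trans hx
    · intro hx
      exact le_of_tendsto' htend hx
  rw [hset]
  exact countable_iInter_mem.2 fun n => hmem n

lemma aux_le_infStar_iff (ψ : X → EReal) (r : EReal) :
    r ≤ infStar ψ ↔ {x : X | r ≤ ψ x} ∈ residual X := by
  constructor
  · intro h
    exact mem_of_superset (aux_infStar_mem ψ) fun x hx => h.trans hx
  · intro h
    exact le_sSup h

end infStarLemmas

/-- Kuratowski–Ulam for functions: for Baire measurable `φ : X × Y → [-∞,∞]` on
Polish spaces, `inf*_{(x,y)} φ = inf*_x inf*_y φ(x,y)`. -/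
theorem infStar_comm {X Y : Type*} [TopologicalSpace X] [PolishSpace X]
    [TopologicalSpace Y] [PolishSpace Y] (φ : X × Y → EReal)
    (hφ : BaireMeasurableFun φ) :
    infStar φ = infStar (fun x : X => infStar (fun y : Y => φ (x, y))) := by
  haveI : BaireSpace X := by letI := upgradeIsCompletelyMetrizable X; infer_instance
  haveI : BaireSpace Y := by letI := upgradeIsCompletelyMetrizable Y; infer_instance
  apply le_antisymm
  · -- `infStar φ ≤ infStar (inner)`
    apply sSup_le
    intro r hr
    rw [aux_le_infStar_iff]
    have := aux_residual_sections (X := X) (Y := Y) hr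
    filter_upwards [this] with x hx
    exact (aux_le_infStar_iff (fun y => φ (x, y)) r).2 hx
  · -- the hard direction
    set J := infStar (fun x : X => infStar (fun y : Y => φ (x, y))) with hJ
    have hBM : BaireMeasurableSet {p : X × Y | J ≤ φ p} := hφ (Set.Ici J) measurableSet_Ici
    have hsec : ∀ᶠ x in residual X, {y : Y | (x, y) ∈ {p : X × Y | J ≤ φ p}} ∈ residual Y := by
      filter_upwards [aux_infStar_mem (fun x : X => infStar (fun y : Y => φ (x, y)))] with x hx
      exact (aux_le_infStar_iff (fun y => φ (x, y)) J).1 hx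
    exact le_sSup (aux_residual_of_sections hBM hsec)
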